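/- Let beta(tau) be the Mobius transformation of the matrix [[p, omega],[1, conj(p)]] with p = 2+omega, acting on the upper half plane. Then beta maps [1, theta]^T (i.e. the point with homogeneous coordinates a=1, b=theta, evaluated as (pa + omega b)/(a + conj(p) b)) to 0, maps [1,0]^T to p, maps [0,1]^T to -1/p, and maps the point corresponding to a = 1/(2(4+sqrt 3)), b = xi/(2(4+sqrt 3)) with xi = e^{-pi i/6} to i. -/
import Mathlib


noncomputable section

/-- `ω = e^{2πi/3}`. -/
def ω : ℂ := Complex.exp (2 * Real.pi * Complex.I / 3)

/-- `p = 2 + ω`. -/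
def p : ℂ := 2 + ω

/-- `θ = ω - conj ω`. -/
def θ : ℂ := ω - (starRingEnd ℂ) ω

/-- `ξ = e^{-πi/6}`. -/
def ξ : ℂ := Complex.exp (-(Real.pi * Complex.I) / 6)

lemma omega_eq : ω = -1/2 + ((Real.sqrt 3 : ℝ) : ℂ) / 2 * Complex.I := by
  have h : (2 * Real.pi * Complex.I / 3 : ℂ) = ((2 * Real.pi / 3 : ℝ) : ℂ) * Complex.I := by
    push_cast; ring
  rw [ω, h, Complex.exp_mul_I, ← Complex.ofReal_cos, ← Complex.ofReal_sin]
  have hc : Real.cos (2 * Real.pi / 3) = -(1/2) := by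
    have : (2 * Real.pi / 3 : ℝ) = Real.pi - Real.pi/3 := by ring
    rw [this, Real.cos_pi_sub, Real.cos_pi_div_three]
  have hs : Real.sin (2 * Real.pi / 3) = Real.sqrt 3 / 2 := by
    have : (2 * Real.pi / 3 : ℝ) = Real.pi - Real.pi/3 := by ring
    rw [this, Real.sin_pi_sub, Real.sin_pi_div_three]
  rw [hc, hs]; push_cast; ring

lemma xi_eq : ξ = ((Real.sqrt 3 : ℝ) : ℂ) / 2 - (1/2 : ℂ) * Complex.I := by
  have h : (-(Real.pi * Complex.I) / 6 : ℂ) = ((-(Real.pi / 6) : ℝ) : ℂ) * Complex.I := by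
    push_cast; ring
  rw [ξ, h, Complex.exp_mul_I, ← Complex.ofReal_cos, ← Complex.ofReal_sin, Real.cos_neg,
    Real.sin_neg, Real.cos_pi_div_six, Real.sin_pi_div_six]
  push_cast; ring

lemma conj_omega_eq : (starRingEnd ℂ) ω = -1/2 - ((Real.sqrt 3 : ℝ) : ℂ) / 2 * Complex.I := by
  rw [omega_eq]
  simp only [map_add, map_mul, map_div₀, map_neg, map_one, map_ofNat, Complex.conj_I,
    Complex.conj_ofReal]
  ring

lemma conj_p_eq : (starRingEnd ℂ) p = 3/2 - ((Real.sqrt 3 : ℝ) : ℂ) / 2 * Complex.I := by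
  rw [p, map_add, conj_omega_eq, map_ofNat]
  ring

lemma sqrt3_sq : ((Real.sqrt 3 : ℝ) : ℂ)^2 = 3 := by
  norm_cast
  rw [Real.sq_sqrt]; norm_num

/-- The Möbius transformation `[a,b]ᵀ ↦ (pa + ωb)/(a + conj(p) b)` of the matrix
`β = [[p, ω],[1, conj p]]` maps `[1, θ]ᵀ` to `0`, maps `[1,0]ᵀ` to `p`, maps
`[0,1]ᵀ` to `-1/p`, and maps the point with `a = 1/(2(4+√3))`, `b = ξ·a` to `i`. -/
theorem beta_special_values :
    (p * 1 + ω * θ) / (1 + (starRingEnd ℂ) p * θ) = 0 ∧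
    (p * 1 + ω * 0) / (1 + (starRingEnd ℂ) p * 0) = p ∧
    (p * 0 + ω * 1) / (0 + (starRingEnd ℂ) p * 1) = -1 / p ∧
    (letI a : ℂ := 1 / (2 * (4 + (Real.sqrt 3 : ℂ)));
      (p * a + ω * (ξ * a)) / (a + (starRingEnd ℂ) p * (ξ * a)) = Complex.I) := by
  set s : ℂ := ((Real.sqrt 3 : ℝ) : ℂ) with hs_def
  have hs2 : s^2 = 3 := sqrt3_sq
  have hθ : θ = s * Complex.I := by
    rw [θ, conj_omega_eq, omega_eq]; ring
  refine ⟨?_, ?_, ?_, ?_⟩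
  · have hnum : p * 1 + ω * θ = 0 := by
      rw [p, omega_eq, hθ]
      linear_combination (-(1:ℂ)/2) * hs2 + (s^2/2) * Complex.I_sq
    rw [hnum, zero_div]
  · simp
  · have hcp : (starRingEnd ℂ) p ≠ 0 := by
      rw [conj_p_eq]
      intro h
      have h2 := congrArg Complex.re h
      simp at h2
    have hp : p ≠ 0 := by
      rw [p, omega_eq]
      intro h
      have h2 := congrArg Complex.re h
      simp at h2
      norm_num at h2
    simp only [mul_zero, zero_add, mul_one]
    rw [div_eq_div_iff hcp hp, conj_p_eq, p, omega_eq]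
    linear_combination (-(1:ℂ)/4) * hs2 + (s^2/4) * Complex.I_sq
  · show (p * (1 / (2 * (4 + s))) + ω * (ξ * (1 / (2 * (4 + s))))) /
      ((1 / (2 * (4 + s))) + (starRingEnd ℂ) p * (ξ * (1 / (2 * (4 + s))))) = Complex.I
    set a : ℂ := 1 / (2 * (4 + s)) with ha_def
    have h4s : (4 : ℂ) + s ≠ 0 := by
      intro h
      have h2 := congrArg Complex.re h
      simp [hs_def] at h2
      nlinarith [Real.sqrt_nonneg 3]
    have ha : a ≠ 0 := by
      rw [ha_def]
      exact one_div_ne_zero (mul_ne_zero two_ne_zero h4s)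
    have hc : (1 : ℂ) + (starRingEnd ℂ) p * ξ = 1 + s/2 - (3/2) * Complex.I := by
      rw [conj_p_eq, xi_eq]
      linear_combination (-(Complex.I)/4) * hs2 + (s/4) * Complex.I_sq
    have hcne : (1 : ℂ) + (starRingEnd ℂ) p * ξ ≠ 0 := by
      rw [hc]
      intro h
      have h2 := congrArg Complex.im h
      simp [hs_def] at h2
    have hD : a + (starRingEnd ℂ) p * (ξ * a) ≠ 0 := by
      have hre : a + (starRingEnd ℂ) p * (ξ * a) = a * (1 + (starRingEnd ℂ) p * ξ) := by ring
      rw [hre]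
      exact mul_ne_zero ha hcne
    rw [div_eq_iff hD]
    have key : p + ω * ξ = Complex.I * (1 + (starRingEnd ℂ) p * ξ) := by
      rw [conj_p_eq, p, omega_eq, xi_eq]
      linear_combination ((Complex.I - 1)/4) * hs2 + (-(s/4) * Complex.I + (s^2 - s + 3)/4) * Complex.I_sq
    linear_combination a * key
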